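/- arXiv:1007.0223 — 7 statements merged into one kernel-verified Lean document; each statement's English description precedes it below -/
import Mathlib

section
/- Let R be an associative unital ring and M an artinian left R-module. Then the only Hausdorff linear topology on M is the discrete topology. -/
/-- A *linear topology* on a left `R`-module `M`: the module operations are continuous,
and `0` has a neighborhood basis consisting of submodules. -/
def IsLinearTopology' (R M : Type*) [Ring R] [AddCommGroup M] [Module R M]
    [TopologicalSpace M] : Prop :=
  ContinuousAdd M ∧ ContinuousNeg M ∧ (∀ r : R, Continuous fun m : M => r • m) ∧
    ∀ U ∈ nhds (0 : M), ∃ N : Submodule R M, (N : Set M) ∈ nhds (0 : M) ∧ (N : Set M) ⊆ U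

/-- `M` is *linearly compact*: its topology is a Hausdorff linear topology such that every
family of cosets of closed submodules of `M` with the finite intersection property has
nonempty intersection. -/
def IsLinearlyCompact (R M : Type*) [Ring R] [AddCommGroup M] [Module R M]
    [TopologicalSpace M] : Prop :=
  IsLinearTopology' R M ∧ T2Space M ∧
    ∀ 𝒞 : Set (Set M),
      (∀ C ∈ 𝒞, ∃ (N : Submodule R M) (x : M),
        IsClosed (N : Set M) ∧ C = (x + ·) '' (N : Set M)) →
      (∀ 𝒟 ⊆ 𝒞, 𝒟.Finite → (⋂₀ 𝒟).Nonempty) →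
      (⋂₀ 𝒞).Nonempty

/-- On an artinian module, the only Hausdorff linear topology is the discrete topology. -/
theorem artinian_hausdorff_linear_topology_discrete (R M : Type*) [Ring R]
    [AddCommGroup M] [Module R M] [IsArtinian R M] (t : TopologicalSpace M)
    (hlin : @IsLinearTopology' R M _ _ _ t) (h2 : @T2Space M t) :
    @DiscreteTopology M t := by
  obtain ⟨hadd, hneg, -, hbasis⟩ := hlin
  haveI := hadd
  haveI := hneg
  haveI : IsTopologicalAddGroup M := { continuous_neg := continuous_neg }
  -- the set of submodules that are neighborhoods of 0
  set S : Set (Submodule R M) := {N | (N : Set M) ∈ nhds (0 : M)} with hS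
  have hSne : S.Nonempty := ⟨⊤, by simp [hS]⟩
  obtain ⟨N, hN, hmin⟩ := IsArtinian.set_has_minimal S hSne
  -- N is below every submodule neighborhood of 0
  have hle : ∀ N' ∈ S, N ≤ N' := by
    intro N' hN'
    have h1 : N ⊓ N' ∈ S := Filter.inter_mem hN hN'
    rcases (inf_le_left : N ⊓ N' ≤ N).lt_or_eq with hlt | heq
    · exact absurd hlt (hmin _ h1)
    · exact heq ▸ inf_le_right
  -- N = ⊥ by Hausdorff
  have hbot : N = ⊥ := by
    by_contra h
    obtain ⟨x, hx, hx0⟩ := Submodule.exists_mem_ne_zero_of_ne_bot h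
    have hopen : ({x}ᶜ : Set M) ∈ nhds (0 : M) :=
      (isOpen_compl_singleton).mem_nhds (by simpa using (Ne.symm hx0))
    obtain ⟨N', hN'nhds, hN'sub⟩ := hbasis _ hopen
    exact hN'sub (hle N' hN'nhds hx) rfl
  have h0 : ({0} : Set M) ∈ nhds (0 : M) := by
    rw [hbot] at hN; simpa [hS] using hN
  rw [discreteTopology_iff_nhds]
  intro x
  have : nhds (0 : M) = pure 0 :=
    le_antisymm (Filter.le_pure_iff.mpr h0) (pure_le_nhds 0)
  rw [← map_add_left_nhds_zero x, this, Filter.map_pure, add_zero]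
end

section
/- Let R be an associative unital ring and M a left R-module that is linearly compact under the discrete topology. Then M does not contain a direct sum of infinitely many nonzero submodules; that is, every independent family of nonzero submodules of M (a family whose sum is direct) is finite. -/
/-- A module that is linearly compact in the discrete topology contains no direct sum of
infinitely many nonzero submodules: any independent family of nonzero submodules is finite. -/
theorem discrete_linearlyCompact_no_infinite_direct_sum (R M : Type*) [Ring R]
    [AddCommGroup M] [Module R M] [TopologicalSpace M] [DiscreteTopology M]
    (h : IsLinearlyCompact R M) (ι : Type*) (N : ι → Submodule R M)
    (hind : iSupIndep N) (hne : ∀ i, N i ≠ ⊥) :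
    Finite ι := by
  classical
  by_contra hinf
  rw [not_finite_iff_infinite] at hinf
  obtain ⟨-, -, hcomp⟩ := h
  choose x hxmem hxne using fun i => Submodule.exists_mem_ne_zero_of_ne_bot (hne i)
  let e := hinf.natEmbedding ι
  set S : ℕ → Submodule R M := fun n => ⨆ (j) (_ : ∀ k ≤ n, j ≠ e k), N j with hS
  set z : ℕ → M := fun n => ∑ k ∈ Finset.range (n + 1), x (e k) with hz
  set C : ℕ → Set M := fun n => (z n + ·) '' (S n : Set M) with hC
  have memC : ∀ n y, y ∈ C n ↔ y - z n ∈ S n := by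
    intro n y
    constructor
    · rintro ⟨s, hs, rfl⟩; simpa using hs
    · intro hy; refine ⟨y - z n, hy, ?_⟩
      show z n + (y - z n) = y
      abel
  have hNS : ∀ n j, (∀ k ≤ n, j ≠ e k) → N j ≤ S n := fun n j hj =>
    le_iSup₂ (f := fun j (_ : ∀ k ≤ n, j ≠ e k) => N j) j hj
  have hzC : ∀ {n m : ℕ}, n ≤ m → z m ∈ C n := by
    intro n m hnm
    rw [memC]
    have hsum : z m - z n = ∑ k ∈ Finset.Ico (n + 1) (m + 1), x (e k) :=
      (Finset.sum_Ico_eq_sub _ (by omega)).symm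
    rw [hsum]
    refine Submodule.sum_mem _ fun k hk => ?_
    rw [Finset.mem_Ico] at hk
    exact hNS n (e k) (fun k' hk' heq => by
      have := e.injective heq; omega) (hxmem (e k))
  have hfip : ∀ 𝒟 ⊆ Set.range C, 𝒟.Finite → (⋂₀ 𝒟).Nonempty := by
    intro 𝒟 hsub hfin
    set g : Set M → ℕ := fun D => if hd : ∃ n, C n = D then hd.choose else 0 with hg
    have hgs : ∀ D ∈ 𝒟, C (g D) = D := by
      intro D hD
      obtain ⟨n, hn⟩ := hsub hD
      simp only [hg, dif_pos (⟨n, hn⟩ : ∃ n, C n = D)]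
      exact (⟨n, hn⟩ : ∃ n, C n = D).choose_spec
    refine ⟨z (hfin.toFinset.sup g), Set.mem_sInter.mpr fun D hD => ?_⟩
    rw [← hgs D hD]
    exact hzC (Finset.le_sup (hfin.mem_toFinset.mpr hD))
  have hclosed : ∀ Cs ∈ Set.range C, ∃ (P : Submodule R M) (w : M),
      IsClosed (P : Set M) ∧ Cs = (w + ·) '' (P : Set M) := by
    rintro _ ⟨n, rfl⟩
    exact ⟨S n, z n, isClosed_discrete _, rfl⟩
  obtain ⟨y, hy⟩ := hcomp (Set.range C) hclosed hfip
  have hyC : ∀ n, y - z n ∈ S n := fun n => (memC n y).mp (hy _ ⟨n, rfl⟩)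
  -- y lies in the sup of finitely many N j
  have hyT : y ∈ ⨆ j, N j := by
    have h1 : (⨆ (j) (_ : ∀ k ≤ 0, j ≠ e k), N j) ≤ ⨆ j, N j :=
      iSup₂_le fun j _ => le_iSup N j
    have h2 : z 0 ∈ ⨆ j, N j := by
      have hz0 : z 0 = x (e 0) := by simp [hz]
      rw [hz0]; exact le_iSup N (e 0) (hxmem (e 0))
    have := add_mem (h1 (hyC 0)) h2
    simpa using this
  rw [Submodule.mem_iSup_iff_exists_finset] at hyT
  obtain ⟨F, hyF⟩ := hyT
  set K := F.preimage e (e.injective.injOn) with hK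
  set m := K.sup id + 1 with hm
  have hemF : e m ∉ F := fun hmem => by
    have : m ∈ K := Finset.mem_preimage.mpr hmem
    have := Finset.le_sup (f := id) this
    simp only [id_eq] at this
    omega
  set T : Submodule R M := ⨆ (j) (_ : j ≠ e m), N j with hT
  have hNT : ∀ j, j ≠ e m → N j ≤ T := fun j hj =>
    le_iSup₂ (f := fun j (_ : j ≠ e m) => N j) j hj
  have hyTm : y ∈ T := by
    refine (iSup₂_le fun j hj => hNT j ?_ : (⨆ j ∈ F, N j) ≤ T) hyF
    rintro rfl; exact hemF hj
  have hwT : (∑ k ∈ Finset.range m, x (e k)) ∈ T :=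
    Submodule.sum_mem _ fun k hk => hNT (e k)
      (fun heq => by have := e.injective heq; rw [Finset.mem_range] at hk; omega)
      (hxmem (e k))
  have hsT : y - z m ∈ T := by
    refine (iSup₂_le fun j hj => hNT j (hj m le_rfl) : S m ≤ T) (hyC m)
  have hxT : x (e m) ∈ T := by
    have hzm : z m = (∑ k ∈ Finset.range m, x (e k)) + x (e m) := by
      rw [hz]; exact Finset.sum_range_succ _ m
    have : x (e m) = (y - (∑ k ∈ Finset.range m, x (e k))) - (y - z m) := by
      rw [hzm]; abel
    rw [this]
    exact sub_mem (sub_mem hyTm hwT) hsT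
  have : x (e m) = 0 := by
    have := (hind (e m)).le_bot (Submodule.mem_inf.mpr ⟨hxmem (e m), hxT⟩)
    simpa using this
  exact hxne (e m) this
end

section
/- Let R be an associative unital ring and M a linearly compact left R-module. The open submodules N of M form an inversely directed system under inclusion, each quotient M/N is a discrete linearly compact R-module, and the canonical map from M to the inverse limit lim← M/N (taken over all open submodules N, with the inverse limit topology) is an isomorphism of topological R-modules. In particular, every linearly compact R-module is an inverse limit of an inversely directed system of discrete linearly compact R-modules. -/
section Aux

variable {R M : Type*} [Ring R] [AddCommGroup M] [Module R M] [TopologicalSpace M]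

/-- A coset description of the preimage of a coset under the quotient map. -/
lemma aux_preimage_coset [ContinuousAdd M] (N : Submodule R M) (K : Submodule R (M ⧸ N))
    (x : M) :
    N.mkQ ⁻¹' ((N.mkQ x + ·) '' (K : Set (M ⧸ N))) =
      (x + ·) '' ((K.comap N.mkQ : Submodule R M) : Set M) := by
  ext m
  simp only [Set.mem_preimage, Set.mem_image, SetLike.mem_coe, Submodule.mem_comap]
  constructor
  · rintro ⟨k, hk, hkm⟩
    refine ⟨m - x, ?_, by abel⟩
    have : N.mkQ (m - x) = k := by
      rw [map_sub, ← hkm]; abel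
    rwa [this]
  · rintro ⟨n, hn, rfl⟩
    exact ⟨N.mkQ n, hn, by rw [map_add]⟩

/-- Finite infima of open submodules are open. -/
lemma aux_finset_inf_open [ContinuousAdd M]
    (s : Finset {N : Submodule R M // IsOpen (N : Set M)}) :
    IsOpen ((s.inf (fun N => N.1) : Submodule R M) : Set M) := by
  classical
  induction s using Finset.induction_on with
  | empty => simp only [Finset.inf_empty, Submodule.top_coe]; exact isOpen_univ
  | @insert a t hns ih =>
    rw [Finset.inf_insert, Submodule.coe_inf]
    exact IsOpen.inter a.2 ih

end Aux

/-- A linearly compact module `M` is the inverse limit of its discrete linearly compact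
quotients by open submodules: the open submodules form an inversely directed system, each
quotient `M ⧸ N` is discrete and linearly compact, and the canonical map from `M` into
the product of the quotients is a topological embedding whose range is exactly the inverse
limit (the set of compatible families). -/
theorem linearlyCompact_eq_invLim_discrete_quotients (R M : Type*) [Ring R]
    [AddCommGroup M] [Module R M] [TopologicalSpace M] (h : IsLinearlyCompact R M) :
    (∀ N₁ N₂ : Submodule R M, IsOpen (N₁ : Set M) → IsOpen (N₂ : Set M) →
      ∃ N₃ : Submodule R M, IsOpen (N₃ : Set M) ∧ N₃ ≤ N₁ ∧ N₃ ≤ N₂) ∧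
    (∀ N : Submodule R M, IsOpen (N : Set M) →
      DiscreteTopology (M ⧸ N) ∧ IsLinearlyCompact R (M ⧸ N)) ∧
    Topology.IsEmbedding
      (fun (m : M) (N : {N : Submodule R M // IsOpen (N : Set M)}) =>
        (Submodule.Quotient.mk m : M ⧸ N.1)) ∧
    Set.range (fun (m : M) (N : {N : Submodule R M // IsOpen (N : Set M)}) =>
        (Submodule.Quotient.mk m : M ⧸ N.1)) =
      {f : ∀ N : {N : Submodule R M // IsOpen (N : Set M)}, M ⧸ N.1 |
        ∀ (N N' : {N : Submodule R M // IsOpen (N : Set M)}) (hNN' : N.1 ≤ N'.1),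
          Submodule.mapQ N.1 N'.1 LinearMap.id (fun _ hx => hNN' hx) (f N) = f N'} := by
  classical
  obtain ⟨⟨hadd, hneg, hsmul, hbasis⟩, ht2, hcompact⟩ := h
  haveI : ContinuousAdd M := hadd
  haveI : ContinuousNeg M := hneg
  haveI : IsTopologicalAddGroup M := { }
  haveI : T2Space M := ht2
  set ι := {N : Submodule R M // IsOpen (N : Set M)} with hι
  -- separation: the only element of every open submodule is 0
  haveI hne : Nonempty ι := ⟨⟨⊤, by simp⟩⟩
  have hsep : ∀ m : M, (∀ N : ι, m ∈ N.1) → m = 0 := by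
    intro m hm
    by_contra hm0
    have h0 : (0 : M) ∈ ({m}ᶜ : Set M) := by simpa using (Ne.symm hm0)
    obtain ⟨N, hN1, hN2⟩ := hbasis _ (isOpen_compl_singleton.mem_nhds h0)
    have hNopen : IsOpen (N : Set M) := AddSubgroup.isOpen_of_mem_nhds N.toAddSubgroup hN1
    exact hN2 (hm ⟨N, hNopen⟩) rfl
  refine ⟨?_, ?_, ?_, ?_⟩
  · -- directedness
    intro N₁ N₂ h1 h2
    exact ⟨N₁ ⊓ N₂, by rw [Submodule.coe_inf]; exact h1.inter h2, inf_le_left, inf_le_right⟩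
  · -- discrete linearly compact quotients
    intro N hN
    haveI hdisc : DiscreteTopology (M ⧸ N) := QuotientAddGroup.discreteTopology (N := N.toAddSubgroup) hN
    have hcont : Continuous N.mkQ := N.isOpenQuotientMap_mkQ.continuous
    have hsurj := N.mkQ_surjective
    refine ⟨hdisc, ⟨inferInstance, inferInstance, fun r => continuous_of_discreteTopology, ?_⟩,
      inferInstance, ?_⟩
    · intro U hU
      refine ⟨⊥, ?_, ?_⟩
      · rw [Submodule.bot_coe]
        exact (isOpen_discrete _).mem_nhds rfl
      · rw [Submodule.bot_coe]
        rintro x rfl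
        exact mem_of_mem_nhds hU
    · -- the coset intersection property for the quotient
      intro 𝒞 hcos hfip
      have main := hcompact ((fun C => N.mkQ ⁻¹' C) '' 𝒞) ?_ ?_
      · obtain ⟨m, hm⟩ := main
        exact ⟨N.mkQ m, fun C hC => hm _ ⟨C, hC, rfl⟩⟩
      · rintro _ ⟨C, hC, rfl⟩
        obtain ⟨K, xbar, _, rfl⟩ := hcos C hC
        obtain ⟨x, rfl⟩ := hsurj xbar
        exact ⟨K.comap N.mkQ, x, (isClosed_discrete _).preimage hcont,
          aux_preimage_coset N K x⟩
      · intro 𝒟' h𝒟' hfin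
        choose! g hg1 hg2 using fun D (hD : D ∈ 𝒟') => h𝒟' hD
        have := hfip (g '' 𝒟') (by rintro _ ⟨D, hD, rfl⟩; exact hg1 D hD) (hfin.image _)
        obtain ⟨ybar, hybar⟩ := this
        obtain ⟨y, rfl⟩ := hsurj ybar
        refine ⟨y, fun D hD => ?_⟩
        rw [← hg2 D hD]
        exact hybar _ ⟨D, hD, rfl⟩
  · -- embedding
    haveI hdisc : ∀ N : ι, DiscreteTopology (M ⧸ N.1) :=
      fun N => QuotientAddGroup.discreteTopology (N := N.1.toAddSubgroup) N.2
    set f : M → ∀ N : ι, M ⧸ N.1 :=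
      fun m N => (Submodule.Quotient.mk m : M ⧸ N.1) with hf
    have hinj : Function.Injective f := by
      intro a b hab
      have hmem : ∀ N : ι, a - b ∈ N.1 :=
        fun N => (Submodule.Quotient.eq N.1).mp (congrFun hab N)
      have := hsep (a - b) hmem
      exact sub_eq_zero.mp this
    refine ⟨⟨?_⟩, hinj⟩
    -- the topology on M is induced by f
    let fhom : M →+ ∀ N : ι, M ⧸ N.1 :=
      (LinearMap.pi (fun N : ι => N.1.mkQ)).toAddMonoidHom
    have hfe : (fhom : M → ∀ N : ι, M ⧸ N.1) = f := rfl
    refine IsTopologicalAddGroup.ext ‹_› (hfe ▸ topologicalAddGroup_induced fhom) ?_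
    rw [nhds_induced]
    have hf0 : f 0 = 0 := by
      funext N
      simp [hf]
    rw [hf0, nhds_pi]
    have hstep : ∀ N : ι,
        Filter.comap f (Filter.comap (Function.eval N)
          (nhds ((0 : ∀ N : ι, M ⧸ N.1) N))) = Filter.principal (N.1 : Set M) := by
      intro N
      rw [Filter.comap_comap]
      have h1 : nhds ((0 : ∀ N : ι, M ⧸ N.1) N) = pure ((0 : ∀ N : ι, M ⧸ N.1) N) :=
        congrFun (@nhds_discrete (M ⧸ N.1) _ (hdisc N)) _
      rw [h1, Filter.comap_pure]
      congr 1
      ext m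
      simp only [Set.mem_preimage, Set.mem_singleton_iff, SetLike.mem_coe, Function.comp_apply]
      exact Submodule.Quotient.mk_eq_zero N.1
    have hcomap : Filter.comap f (Filter.pi fun N : ι =>
        nhds ((0 : ∀ N : ι, M ⧸ N.1) N)) = ⨅ N : ι, Filter.principal (N.1 : Set M) := by
      rw [Filter.pi, Filter.comap_iInf]
      exact iInf_congr hstep
    rw [hcomap]
    refine le_antisymm (le_iInf fun N => Filter.le_principal_iff.mpr
      (N.2.mem_nhds N.1.zero_mem)) ?_
    intro U hU
    obtain ⟨N, hN1, hN2⟩ := hbasis U hU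
    have hNopen : IsOpen (N : Set M) := AddSubgroup.isOpen_of_mem_nhds N.toAddSubgroup hN1
    exact Filter.mem_iInf_of_mem ⟨N, hNopen⟩ (Filter.mem_principal.mpr hN2)
  · -- the range is the set of compatible families
    ext fm
    simp only [Set.mem_range, Set.mem_setOf_eq]
    constructor
    · rintro ⟨m, rfl⟩ N N' hNN'
      simp [Submodule.mapQ_apply]
    · intro hfm
      have main := hcompact (Set.range fun N : ι => N.1.mkQ ⁻¹' {fm N}) ?_ ?_
      · obtain ⟨m, hm⟩ := main
        refine ⟨m, funext fun N => ?_⟩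
        have := hm _ ⟨N, rfl⟩
        simpa using this
      · rintro _ ⟨N, rfl⟩
        obtain ⟨x, hx⟩ := N.1.mkQ_surjective (fm N)
        refine ⟨N.1, x, AddSubgroup.isClosed_of_isOpen N.1.toAddSubgroup N.2, ?_⟩
        ext m
        simp only [Set.mem_preimage, Set.mem_singleton_iff, Set.mem_image, SetLike.mem_coe]
        constructor
        · intro hmx
          refine ⟨m - x, ?_, by abel⟩
          have hmm : N.1.mkQ m = N.1.mkQ x := hmx.trans hx.symm
          rw [Submodule.mkQ_apply, Submodule.mkQ_apply] at hmm
          exact (Submodule.Quotient.eq N.1).mp hmm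
        · rintro ⟨n, hn, rfl⟩
          have hn0 : N.1.mkQ n = 0 := by
            rw [Submodule.mkQ_apply]
            exact (Submodule.Quotient.mk_eq_zero N.1).mpr hn
          rw [map_add, hn0, add_zero, hx]
      · intro 𝒟 h𝒟 hfin
        choose! g hg using fun D (hD : D ∈ 𝒟) => h𝒟 hD
        set s : Finset ι := hfin.toFinset.image g with hs
        set N₀ : Submodule R M := s.inf (fun N => N.1) with hN₀
        have hN₀open : IsOpen (N₀ : Set M) := aux_finset_inf_open s
        set Nι : ι := ⟨N₀, hN₀open⟩ with hNι
        obtain ⟨m, hm⟩ := N₀.mkQ_surjective (fm Nι)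
        have key : ∀ N ∈ s, N.1.mkQ m = fm N := by
          intro N hNs
          have hle : N₀ ≤ N.1 := Finset.inf_le hNs
          have := hfm Nι N hle
          rw [← this]
          have hm' : fm Nι = Submodule.Quotient.mk m := hm.symm
          rw [hm', Submodule.mapQ_apply]
          rfl
        refine ⟨m, fun D hD => ?_⟩
        rw [← hg D hD]
        have hgs : g D ∈ s := by
          rw [hs]
          exact Finset.mem_image_of_mem g (hfin.mem_toFinset.mpr hD)
        simpa using key (g D) hgs
end

section
/- Let R be an associative unital ring and M a linearly compact left R-module. Then the sum M₁ + M₂ of any two closed submodules M₁, M₂ of M is a closed submodule of M. -/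
/-- In a linearly compact module, the sum of two closed submodules is closed. -/
theorem sum_closed_submodules_isClosed (R M : Type*) [Ring R] [AddCommGroup M]
    [Module R M] [TopologicalSpace M] (h : IsLinearlyCompact R M)
    (M₁ M₂ : Submodule R M) (h₁ : IsClosed (M₁ : Set M)) (h₂ : IsClosed (M₂ : Set M)) :
    IsClosed ((M₁ ⊔ M₂ : Submodule R M) : Set M) := by
  obtain ⟨⟨hadd, hneg, hsmul, hbasis⟩, hT2, hlc⟩ := h
  haveI := hadd
  haveI := hneg
  refine isClosed_of_closure_subset fun x hx => ?_
  -- the family of cosets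
  set 𝒞 : Set (Set M) :=
    insert ((x + ·) '' (M₁ : Set M))
      {S | ∃ N : Submodule R M, (N : Set M) ∈ nhds (0 : M) ∧
        S = ((M₂ ⊔ N : Submodule R M) : Set M)} with h𝒞
  have hopenclosed : ∀ N : Submodule R M, (N : Set M) ∈ nhds (0 : M) →
      IsClosed ((M₂ ⊔ N : Submodule R M) : Set M) := by
    intro N hN
    have h1 : (((M₂ ⊔ N : Submodule R M).toAddSubgroup : AddSubgroup M) : Set M)
        ∈ nhds (0 : M) := by
      refine Filter.mem_of_superset hN fun z hz => ?_
      exact Submodule.mem_sup_right hz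
    exact AddSubgroup.isClosed_of_isOpen _ (AddSubgroup.isOpen_of_mem_nhds _ h1)
  -- every member of 𝒞 is a coset of a closed submodule
  have hforms : ∀ C ∈ 𝒞, ∃ (N : Submodule R M) (y : M),
      IsClosed (N : Set M) ∧ C = (y + ·) '' (N : Set M) := by
    intro C hC
    rcases hC with hC | ⟨N, hN, rfl⟩
    · exact ⟨M₁, x, h₁, hC⟩
    · refine ⟨M₂ ⊔ N, 0, hopenclosed N hN, ?_⟩
      ext z
      simp [zero_add]
  -- finite intersection property
  have key : ∀ 𝒟 : Set (Set M), 𝒟.Finite → 𝒟 ⊆ 𝒞 →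
      ∃ K : Submodule R M, (K : Set M) ∈ nhds (0 : M) ∧
        ∀ D ∈ 𝒟, D = (x + ·) '' (M₁ : Set M) ∨
          ((M₂ ⊔ K : Submodule R M) : Set M) ⊆ D := by
    intro 𝒟 hfin
    induction 𝒟, hfin using Set.Finite.induction_on with
    | empty =>
      intro _
      exact ⟨⊤, by simp [Filter.univ_mem], fun D hD => absurd hD (Set.notMem_empty D)⟩
    | insert hnotmem hfin ih =>
      rename_i D 𝒟
      intro hsub
      obtain ⟨K, hK, hKD⟩ := ih fun S hS => hsub (Set.mem_insert_of_mem _ hS)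
      rcases hsub (Set.mem_insert _ _) with hD | ⟨N, hN, rfl⟩
      · refine ⟨K, hK, fun E hE => ?_⟩
        rcases hE with rfl | hE
        · exact Or.inl hD
        · exact hKD E hE
      · refine ⟨K ⊓ N, Filter.inter_mem hK hN, fun E hE => ?_⟩
        rcases hE with rfl | hE
        · refine Or.inr fun z hz => ?_
          have hle : M₂ ⊔ (K ⊓ N) ≤ M₂ ⊔ N := sup_le_sup_left inf_le_right _
          exact hle hz
        · rcases hKD E hE with hE1 | hE2
          · exact Or.inl hE1
          · refine Or.inr fun z hz => hE2 ?_
            have hle : M₂ ⊔ (K ⊓ N) ≤ M₂ ⊔ K := sup_le_sup_left inf_le_left _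
            exact hle hz
  have fip : ∀ 𝒟 ⊆ 𝒞, 𝒟.Finite → (⋂₀ 𝒟).Nonempty := by
    intro 𝒟 hsub hfin
    obtain ⟨K, hK, hKD⟩ := key 𝒟 hfin hsub
    -- x + K is a neighborhood of x
    have hxK : (x + ·) '' (K : Set M) ∈ nhds x := by
      have hpre : ((-x) + ·) ⁻¹' (K : Set M) ∈ nhds x := by
        have := (continuous_add_left (-x)).continuousAt (x := x)
        have h0 : (-x) + x = (0 : M) := by abel
        refine this.preimage_mem_nhds ?_
        rw [h0]; exact hK
      refine Filter.mem_of_superset hpre fun z hz => ?_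
      exact ⟨-x + z, hz, add_neg_cancel_left x z⟩
    obtain ⟨u, huK, huS⟩ := mem_closure_iff_nhds.1 hx _ hxK
    obtain ⟨k, hk, rfl⟩ := huK
    obtain ⟨m₁, hm₁, m₂, hm₂, hsum⟩ := Submodule.mem_sup.1 huS
    refine ⟨x - m₁, fun D hD => ?_⟩
    rcases hKD D hD with rfl | hsubD
    · exact ⟨-m₁, M₁.neg_mem hm₁, (sub_eq_add_neg x m₁).symm⟩
    · apply hsubD
      have heq : x - m₁ = m₂ - k := by
        have h' : m₁ + m₂ = x + k := hsum
        rw [sub_eq_sub_iff_add_eq_add, ← h']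
        abel
      rw [heq]
      exact Submodule.sub_mem _ (Submodule.mem_sup_left hm₂)
        (Submodule.mem_sup_right hk)
  obtain ⟨y, hy⟩ := hlc 𝒞 hforms fip
  have hy1 : y ∈ (x + ·) '' (M₁ : Set M) := hy _ (Set.mem_insert _ _)
  have hy2 : ∀ N : Submodule R M, (N : Set M) ∈ nhds (0 : M) → y ∈ M₂ ⊔ N := by
    intro N hN
    exact hy _ (Set.mem_insert_of_mem _ ⟨N, hN, rfl⟩)
  have hyM₂ : y ∈ M₂ := by
    have : y ∈ closure (M₂ : Set M) := by
      rw [mem_closure_iff_nhds]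
      intro U hU
      have hpre : (y + ·) ⁻¹' U ∈ nhds (0 : M) := by
        have := (continuous_add_left y).continuousAt (x := (0 : M))
        refine this.preimage_mem_nhds ?_
        simpa using hU
      obtain ⟨N, hN, hNsub⟩ := hbasis _ hpre
      obtain ⟨m₂, hm₂, n, hn, hsum⟩ := Submodule.mem_sup.1 (hy2 N hN)
      refine ⟨m₂, ?_, hm₂⟩
      have : m₂ = y + (-n) := (eq_sub_of_add_eq hsum).trans (sub_eq_add_neg y n)
      rw [this]
      exact hNsub (N.neg_mem hn)
    rwa [h₂.closure_eq] at this
  obtain ⟨m₁, hm₁, hym⟩ := hy1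
  rw [eq_sub_of_add_eq hym]
  exact Submodule.sub_mem _ (Submodule.mem_sup_right hyM₂)
    (Submodule.mem_sup_left hm₁)
end

section
/- Let R be an associative unital ring, M a left R-module, and T′ ⊆ T two Hausdorff linear topologies on M. If M is linearly compact under T, then M is linearly compact under T′, and a submodule of M is closed under T if and only if it is closed under T′. -/
/-- A submodule which is a neighborhood of `0` is closed. -/
lemma aux_submodule_closed {R M : Type*} [Ring R] [AddCommGroup M] [Module R M]
    [TopologicalSpace M] (hca : ContinuousAdd M) (U : Submodule R M)
    (hU : (U : Set M) ∈ nhds (0 : M)) : IsClosed (U : Set M) := by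
  have hopen : IsOpen (U.toAddSubgroup : Set M) :=
    AddSubgroup.isOpen_of_mem_nhds U.toAddSubgroup hU
  exact U.toAddSubgroup.isClosed_of_isOpen hopen

/-- In a Hausdorff linear topology, an element of every submodule neighborhood of `0`
is `0`. -/
lemma aux_eq_zero {R M : Type*} [Ring R] [AddCommGroup M] [Module R M]
    [TopologicalSpace M] (hlin : IsLinearTopology' R M) (h2 : T2Space M) (z : M)
    (hz : ∀ U : Submodule R M, (U : Set M) ∈ nhds (0 : M) → z ∈ U) : z = 0 := by
  by_contra hne
  have hmem : ({z}ᶜ : Set M) ∈ nhds (0 : M) := by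
    refine (isOpen_compl_singleton).mem_nhds ?_
    simp [Ne.symm hne]
  obtain ⟨U, hU, hUsub⟩ := hlin.2.2.2 _ hmem
  exact hUsub (hz U hU) rfl

/-- If `T' ⊆ T` are Hausdorff linear topologies on a module `M` and `M` is linearly
compact under `T`, then `M` is linearly compact under `T'` as well, and the same
submodules are closed in the two topologies. -/
theorem linearlyCompact_of_weaker_topology (R M : Type*) [Ring R] [AddCommGroup M]
    [Module R M] (T T' : TopologicalSpace M)
    (hsub : ∀ s : Set M, @IsOpen M T' s → @IsOpen M T s)
    (hlin' : @IsLinearTopology' R M _ _ _ T') (h2' : @T2Space M T')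
    (hlin : @IsLinearTopology' R M _ _ _ T) (h2 : @T2Space M T)
    (hc : @IsLinearlyCompact R M _ _ _ T) :
    @IsLinearlyCompact R M _ _ _ T' ∧
      ∀ N : Submodule R M, @IsClosed M T (N : Set M) ↔ @IsClosed M T' (N : Set M) := by
  -- T'-closed sets are T-closed
  have closed_mono : ∀ s : Set M, @IsClosed M T' s → @IsClosed M T s := by
    intro s hs
    have h1 : @IsOpen M T' sᶜ := hs.isOpen_compl
    letI := T
    exact isOpen_compl_iff.mp (hsub _ h1)
  -- the key direction: T-closed submodules are T'-closed
  have key : ∀ N : Submodule R M, @IsClosed M T (N : Set M) → @IsClosed M T' (N : Set M) := by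
    intro N hN
    letI := T'
    haveI : ContinuousAdd M := hlin'.1
    haveI : ContinuousNeg M := hlin'.2.1
    haveI : T2Space M := h2'
    have hsubset : closure (N : Set M) ⊆ (N : Set M) := by
      intro x hx
      -- the family of intersections of N with cosets x + U
      set 𝒞 : Set (Set M) := {C | ∃ U : Submodule R M, (U : Set M) ∈ nhds (0 : M) ∧
        C = (N : Set M) ∩ (x + ·) '' (U : Set M)} with h𝒞
      -- each member is nonempty and we can pick a point in it
      have hpt : ∀ U : Submodule R M, (U : Set M) ∈ nhds (0 : M) →
          ((N : Set M) ∩ (x + ·) '' (U : Set M)).Nonempty := by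
        intro U hU
        have himg : (x + ·) '' (U : Set M) ∈ nhds x := by
          have := (Homeomorph.addLeft x).isOpenMap.image_mem_nhds hU
          simpa using this
        have := mem_closure_iff_nhds.mp hx _ himg
        exact this.imp fun y hy => ⟨hy.2, hy.1⟩
      -- each member is a coset of a T-closed submodule
      have hclosed : ∀ C ∈ 𝒞, ∃ (P : Submodule R M) (z : M),
          @IsClosed M T (P : Set M) ∧ C = (z + ·) '' (P : Set M) := by
        intro C hC
        obtain ⟨U, hU, rfl⟩ := hC
        obtain ⟨n, hnN, u, huU, hnu⟩ := hpt U hU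
        have hnu' : x + u = n := hnu
        refine ⟨N ⊓ U, n, ?_, ?_⟩
        · have hUc : @IsClosed M T (U : Set M) :=
            closed_mono _ (aux_submodule_closed ‹ContinuousAdd M› U hU)
          rw [Submodule.coe_inf]
          letI := T
          exact hN.inter hUc
        · ext y
          constructor
          · rintro ⟨hyN, w, hwU, rfl⟩
            refine ⟨(x + w) - n, ?_, show n + ((x + w) - n) = x + w by abel⟩
            rw [Submodule.coe_inf]
            refine ⟨N.sub_mem hyN hnN, ?_⟩
            have h3 : (x + w) - n = w - u := by rw [← hnu']; abel
            rw [h3]; exact U.sub_mem hwU huU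
          · rintro ⟨w, hw, rfl⟩
            rw [Submodule.coe_inf] at hw
            exact ⟨N.add_mem hnN hw.1, u + w, U.add_mem huU hw.2,
              show x + (u + w) = n + w by rw [← hnu']; abel⟩
      -- finite intersection property
      have hfip : ∀ 𝒟 ⊆ 𝒞, 𝒟.Finite → (⋂₀ 𝒟).Nonempty := by
        intro 𝒟 h𝒟 hfin
        have hS : ∀ D ∈ 𝒟, ∃ S : Set M, S ∈ nhds x ∧ (N : Set M) ∩ S = D := by
          intro D hD
          obtain ⟨U, hU, rfl⟩ := h𝒟 hD
          refine ⟨(x + ·) '' (U : Set M), ?_, rfl⟩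
          have := (Homeomorph.addLeft x).isOpenMap.image_mem_nhds hU
          simpa using this
        choose! S hS1 hS2 using hS
        haveI : Finite ↥𝒟 := hfin.to_subtype
        have hW : (⋂ D : ↥𝒟, S D) ∈ nhds x :=
          Filter.iInter_mem.mpr fun D => hS1 D D.2
        obtain ⟨y, hyW, hyN⟩ := mem_closure_iff_nhds.mp hx _ hW
        refine ⟨y, fun D hD => ?_⟩
        rw [← hS2 D hD]
        exact ⟨hyN, Set.mem_iInter.mp hyW ⟨D, hD⟩⟩
      obtain ⟨y, hy⟩ := hc.2.2 𝒞 hclosed hfip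
      have hyN : y ∈ N := by
        have hmem : ((N : Set M) ∩ (x + ·) '' ((⊤ : Submodule R M) : Set M)) ∈ 𝒞 :=
          ⟨⊤, by simp, rfl⟩
        exact (hy _ hmem).1
      have hdiff : y - x = 0 := by
        refine aux_eq_zero hlin' h2' _ fun U hU => ?_
        have hmem : ((N : Set M) ∩ (x + ·) '' (U : Set M)) ∈ 𝒞 := ⟨U, hU, rfl⟩
        obtain ⟨-, u, huU, hu⟩ := hy _ hmem
        have hu' : x + u = y := hu
        have : y - x = u := by rw [← hu']; abel
        rw [this]; exact huU
      rwa [show x = y from (sub_eq_zero.mp hdiff).symm]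
    exact isClosed_of_closure_subset hsubset
  refine ⟨⟨hlin', h2', fun 𝒞 hC hfip => hc.2.2 𝒞 (fun C hCmem => ?_) hfip⟩,
    fun N => ⟨key N, fun h => closed_mono _ h⟩⟩
  obtain ⟨P, z, hP, rfl⟩ := hC C hCmem
  exact ⟨P, z, closed_mono _ hP, rfl⟩
end

section
/- Let k be a field and V a linearly compact topological k-vector space. Then the open subspaces of V are precisely the closed subspaces of finite codimension: a subspace W ⊆ V is open if and only if W is closed and dim_k(V/W) is finite. -/
open Filter Submodule

section Aux

variable {k V : Type*} [Field k] [AddCommGroup V] [Module k V] [TopologicalSpace V]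

/-- Reverse direction: a closed subspace of finite codimension in a Hausdorff linearly
topologized space is open.  (Only uses the linear topology and closedness.) -/
theorem aux_closed_fd_open [IsTopologicalAddGroup V]
    (hbasis : ∀ U ∈ nhds (0 : V), ∃ N : Submodule k V,
      (N : Set V) ∈ nhds (0 : V) ∧ (N : Set V) ⊆ U)
    (W : Submodule k V) (hclosed : IsClosed (W : Set V))
    (hfin : FiniteDimensional k (V ⧸ W)) : IsOpen (W : Set V) := by
  haveI := hfin
  set π := W.mkQ with hπ
  set S : Set ℕ :=
    {d | ∃ N : Submodule k V, (N : Set V) ∈ nhds 0 ∧ Module.finrank k (Submodule.map π N) = d}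
    with hS
  have hSne : S.Nonempty := ⟨_, ⊤, by simp, rfl⟩
  obtain ⟨U, hUnhds, hUrank⟩ : sInf S ∈ S := Nat.sInf_mem hSne
  have key : ∀ N : Submodule k V, (N : Set V) ∈ nhds 0 →
      Submodule.map π (N ⊓ U) = Submodule.map π U := by
    intro N hN
    have hmem : ((N ⊓ U : Submodule k V) : Set V) ∈ nhds (0 : V) := by
      rw [Submodule.coe_inf]; exact Filter.inter_mem hN hUnhds
    have hle : Submodule.map π (N ⊓ U) ≤ Submodule.map π U := Submodule.map_mono inf_le_right
    refine Submodule.eq_of_le_of_finrank_le hle ?_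
    rw [hUrank]
    exact Nat.sInf_le ⟨N ⊓ U, hmem, rfl⟩
  rcases eq_or_ne (Submodule.map π U) ⊥ with hbot | hne
  · have hUW : (U : Set V) ⊆ (W : Set V) := by
      intro v hv
      have : π v ∈ Submodule.map π U := Submodule.mem_map_of_mem hv
      rw [hbot, Submodule.mem_bot] at this
      have : v ∈ LinearMap.ker π := this
      rwa [hπ, Submodule.ker_mkQ] at this
    exact AddSubgroup.isOpen_of_mem_nhds W.toAddSubgroup
      (Filter.mem_of_superset hUnhds hUW)
  · exfalso
    obtain ⟨q, hqmem, hq0⟩ := (Submodule.ne_bot_iff _).1 hne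
    obtain ⟨v, hvU, rfl⟩ := hqmem
    have hvW : v ∉ W := by
      intro hvW
      exact hq0 ((Submodule.Quotient.mk_eq_zero W).2 hvW)
    apply hvW
    have : v ∈ closure (W : Set V) := by
      rw [mem_closure_iff_nhds]
      intro t ht
      have hcont : ContinuousAt (fun y : V => v + y) 0 := by
        fun_prop
      have hpre : ((fun y : V => v + y) ⁻¹' t) ∈ nhds (0 : V) :=
        hcont.preimage_mem_nhds (by simpa using ht)
      obtain ⟨N, hNnhds, hNsub⟩ := hbasis _ hpre
      have : π v ∈ Submodule.map π (N ⊓ U) := by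
        rw [key N hNnhds]; exact Submodule.mem_map_of_mem hvU
      obtain ⟨w, hwNU, hwv⟩ := this
      refine ⟨v - w, ?_, ?_⟩
      · have : (-w : V) ∈ (N : Set V) := N.neg_mem hwNU.1
        have := hNsub this
        simpa [sub_eq_add_neg] using this
      · have : π (v - w) = 0 := by rw [map_sub, hwv, sub_self]
        have : v - w ∈ LinearMap.ker π := this
        rwa [hπ, Submodule.ker_mkQ] at this
    rwa [hclosed.closure_eq] at this

end Aux

/-- In a linearly compact vector space, the open subspaces are precisely the closed
subspaces of finite codimension. -/
theorem open_iff_closed_finite_codim (k V : Type*) [Field k] [AddCommGroup V]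
    [Module k V] [TopologicalSpace V] (h : IsLinearlyCompact k V) (W : Submodule k V) :
    IsOpen (W : Set V) ↔ IsClosed (W : Set V) ∧ FiniteDimensional k (V ⧸ W) := by
  classical
  obtain ⟨⟨hadd, hneg, hsmul, hbasis⟩, hT2, hcompact⟩ := h
  haveI : ContinuousAdd V := hadd
  haveI : ContinuousNeg V := hneg
  haveI : IsTopologicalAddGroup V := ⟨⟩
  constructor
  · intro hW
    have hWnhds : (W : Set V) ∈ nhds (0 : V) := hW.mem_nhds W.zero_mem
    refine ⟨AddSubgroup.isClosed_of_isOpen W.toAddSubgroup hW, ?_⟩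
    by_contra hfin
    -- build an infinite linearly independent family in the quotient
    let b := Module.Basis.ofVectorSpace k (V ⧸ W)
    have hinf : (Module.Basis.ofVectorSpaceIndex k (V ⧸ W)).Infinite := by
      intro hfinite
      haveI := hfinite.fintype
      exact hfin (Module.Finite.of_basis b)
    let emb := Set.Infinite.natEmbedding _ hinf
    let e : ℕ → V ⧸ W := fun n => b (emb n)
    have hli : LinearIndependent k e := b.linearIndependent.comp _ emb.injective
    choose x hx using fun n => Submodule.Quotient.mk_surjective W (e n)
    -- the descending chain of cosets
    let s : ℕ → V := fun n => ∑ i ∈ Finset.range n, x i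
    let T : ℕ → Submodule k V := fun n => W ⊔ Submodule.span k (x '' {i | n ≤ i})
    let C : ℕ → Set V := fun n => (s n + ·) '' ((T n : Set V))
    have hTnhds : ∀ n, ((T n : Submodule k V) : Set V) ∈ nhds (0 : V) := fun n =>
      Filter.mem_of_superset hWnhds (SetLike.coe_subset_coe.2 le_sup_left)
    have hTclosed : ∀ n, IsClosed ((T n : Submodule k V) : Set V) := fun n =>
      AddSubgroup.isClosed_of_isOpen (T n).toAddSubgroup
        (AddSubgroup.isOpen_of_mem_nhds _ (hTnhds n))
    -- claim A : s n ∈ C m for m ≤ n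
    have claimA : ∀ m n, m ≤ n → s n ∈ C m := by
      intro m n hmn
      refine ⟨s n - s m, ?_, by simp⟩
      have hsum : s n - s m = ∑ i ∈ Finset.Ico m n, x i := by
        rw [eq_comm, Finset.sum_Ico_eq_sub _ hmn]
      rw [SetLike.mem_coe, hsum]
      refine Submodule.sum_mem _ fun i hi => ?_
      apply Submodule.mem_sup_right
      exact Submodule.subset_span ⟨i, (Finset.mem_Ico.1 hi).1, rfl⟩
    -- apply linear compactness
    have hcosets : ∀ C' ∈ Set.range C, ∃ (N : Submodule k V) (x : V),
        IsClosed (N : Set V) ∧ C' = (x + ·) '' (N : Set V) := by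
      rintro C' ⟨n, rfl⟩
      exact ⟨T n, s n, hTclosed n, rfl⟩
    have hFIP : ∀ 𝒟 ⊆ Set.range C, 𝒟.Finite → (⋂₀ 𝒟).Nonempty := by
      intro 𝒟 h𝒟sub h𝒟fin
      let g : Set V → ℕ := fun D => if hD : ∃ n, C n = D then hD.choose else 0
      have hg : ∀ D ∈ 𝒟, C (g D) = D := by
        intro D hD
        obtain ⟨n, hn⟩ := h𝒟sub hD
        have hE : ∃ n, C n = D := ⟨n, hn⟩
        simp only [g, dif_pos hE]
        exact hE.choose_spec
      let F := h𝒟fin.toFinset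
      let N := F.sup g
      refine ⟨s N, ?_⟩
      rintro D hD
      rw [← hg D hD]
      exact claimA _ _ (Finset.le_sup (h𝒟fin.mem_toFinset.2 hD))
    obtain ⟨v, hv⟩ := hcompact (Set.range C) hcosets hFIP
    -- extract the contradiction
    have hmk : ∀ i, W.mkQ (x i) = e i := fun i => hx i
    have claimB : ∀ n, W.mkQ v - (∑ i ∈ Finset.range n, e i) ∈
        Submodule.span k (e '' {i | n ≤ i}) := by
      intro n
      obtain ⟨t, htT, htv⟩ := hv (C n) ⟨n, rfl⟩
      have hvst : v = s n + t := htv.symm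
      rw [SetLike.mem_coe] at htT
      obtain ⟨w, hwW, z, hz, hwz⟩ := Submodule.mem_sup.1 htT
      have h1 : W.mkQ v = (∑ i ∈ Finset.range n, e i) + W.mkQ z := by
        rw [hvst, ← hwz, map_add, map_add, map_sum]
        simp only [hmk]
        have : W.mkQ w = 0 := (Submodule.Quotient.mk_eq_zero W).2 hwW
        rw [this, zero_add]
      rw [h1, add_sub_cancel_left]
      have : W.mkQ z ∈ Submodule.map W.mkQ (Submodule.span k (x '' {i | n ≤ i})) :=
        Submodule.mem_map_of_mem hz
      rw [Submodule.map_span, Set.image_image] at this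
      simpa only [hmk] using this
    -- turn into finsupp coefficients
    have h0 := claimB 0
    rw [Finset.range_zero, Finset.sum_empty, sub_zero] at h0
    obtain ⟨c, _, hc⟩ := (Finsupp.mem_span_image_iff_linearCombination k).1 h0
    have hcj : ∀ j, c j = 1 := by
      intro j
      obtain ⟨d, hdsupp, hd⟩ :=
        (Finsupp.mem_span_image_iff_linearCombination k).1 (claimB (j + 1))
      have hσ : Finsupp.linearCombination k e
          (∑ i ∈ Finset.range (j + 1), Finsupp.single i (1 : k)) =
          ∑ i ∈ Finset.range (j + 1), e i := by
        rw [map_sum]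
        simp [Finsupp.linearCombination_single]
      have heq : Finsupp.linearCombination k e c =
          Finsupp.linearCombination k e
            (d + ∑ i ∈ Finset.range (j + 1), Finsupp.single i (1 : k)) := by
        rw [hc, map_add, hd, hσ, sub_add_cancel]
      have hcd := hli heq
      have hdj : d j = 0 := by
        by_contra hdj
        have : j ∈ {i | j + 1 ≤ i} := (Finsupp.mem_supported k d).1 hdsupp
          (Finsupp.mem_support_iff.2 hdj)
        exact Nat.not_succ_le_self j this
      have hσj : (∑ i ∈ Finset.range (j + 1), Finsupp.single i (1 : k)) j = 1 := by
        rw [Finset.sum_apply']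
        rw [Finset.sum_eq_single j (fun i _ hij => Finsupp.single_eq_of_ne hij.symm)
          (fun hj => absurd (Finset.self_mem_range_succ j) hj)]
        simp
      rw [hcd, Finsupp.add_apply, hdj, zero_add]
      exact hσj
    obtain ⟨j, hj⟩ := Infinite.exists_notMem_finset c.support
    exact hj (Finsupp.mem_support_iff.2 (by rw [hcj j]; exact one_ne_zero))
  · rintro ⟨hclosed, hfin⟩
    exact aux_closed_fd_open hbasis W hclosed hfin
end

section
/- Let k be a field and V a topological k-vector space whose topology is a linear topology. Then V is linearly compact if and only if V is isomorphic, as a topological vector space, to a direct product k^I of copies of k, where each factor k carries the discrete topology and k^I carries the product topology. -/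
universe u v

theorem IsLinearTopology'.tag {R M : Type*} [Ring R] [AddCommGroup M] [Module R M]
    [TopologicalSpace M] (h : IsLinearTopology' R M) : IsTopologicalAddGroup M :=
  { toContinuousAdd := h.1, toContinuousNeg := h.2.1 }

section Aux
variable {k : Type*} {V : Type*} [Field k] [AddCommGroup V] [Module k V] [TopologicalSpace V]

theorem exists_open_submodule (h : IsLinearTopology' k V) {U : Set V} (hU : U ∈ nhds 0) :
    ∃ N : Submodule k V, IsOpen (N : Set V) ∧ (N : Set V) ⊆ U := by
  haveI := h.1
  obtain ⟨N, hN, hNU⟩ := h.2.2.2 U hU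
  exact ⟨N, AddSubgroup.isOpen_of_mem_nhds N.toAddSubgroup hN, hNU⟩

theorem continuous_of_ker_open [TopologicalSpace k] [DiscreteTopology k]
    (hg : IsTopologicalAddGroup V) (f : V →ₗ[k] k)
    {N : Submodule k V} (hNo : IsOpen (N : Set V)) (hNf : ∀ v ∈ N, f v = 0) :
    Continuous f := by
  haveI := hg
  rw [continuous_discrete_rng]
  intro c
  rw [isOpen_iff_mem_nhds]
  intro w hw
  have : (w + ·) '' (N : Set V) ∈ nhds w := by
    have hopen : IsOpen ((w + ·) '' (N : Set V)) := isOpenMap_add_left w _ hNo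
    exact hopen.mem_nhds ⟨0, N.zero_mem, by simp⟩
  refine Filter.mem_of_superset this ?_
  rintro _ ⟨n, hn, rfl⟩
  simp only [Set.mem_preimage, Set.mem_singleton_iff, map_add]
  rw [hNf n hn, add_zero]
  exact hw

theorem exists_continuous_functional [TopologicalSpace k] [DiscreteTopology k]
    (h : IsLinearTopology' k V) [T2Space V] {v : V} (hv : v ≠ 0) :
    ∃ f : V →ₗ[k] k, Continuous f ∧ f v ≠ 0 := by
  have h0 : ({v}ᶜ : Set V) ∈ nhds (0 : V) :=
    (isOpen_compl_singleton).mem_nhds (by simpa using (Ne.symm hv))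
  obtain ⟨N, hNo, hNU⟩ := exists_open_submodule h h0
  have hvN : v ∉ N := fun hvn => (hNU hvn) rfl
  obtain ⟨f, hfv, hfN⟩ := N.exists_dual_map_eq_bot_of_notMem hvN inferInstance
  refine ⟨f, ?_, hfv⟩
  refine continuous_of_ker_open h.tag f hNo fun w hw => ?_
  have : f w ∈ N.map f := Submodule.mem_map_of_mem hw
  rwa [hfN, Submodule.mem_bot] at this

omit [TopologicalSpace V] in
theorem surjective_pi_of_linearIndependent {n : ℕ} (f : Fin n → (V →ₗ[k] k))
    (hf : LinearIndependent k f) : Function.Surjective (LinearMap.pi f) := by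
  rw [← LinearMap.range_eq_top]
  by_contra hne
  obtain ⟨φ, hφ0, hφ⟩ := (LinearMap.range (LinearMap.pi f)).exists_dual_map_eq_bot_of_lt_top
    (lt_top_iff_ne_top.2 hne) inferInstance
  have key : ∀ x : Fin n → k, φ x = ∑ j, x j * φ (Pi.single j 1) := by
    intro x
    have hx : x = ∑ j, x j • (Pi.single j (1 : k) : Fin n → k) := by
      funext i
      simp [Finset.sum_apply, Pi.single_apply, Finset.sum_ite_eq', mul_comm]
    conv_lhs => rw [hx]
    rw [map_sum]
    simp [smul_eq_mul]
  have hzero : ∀ v : V, φ (LinearMap.pi f v) = 0 := by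
    intro v
    have : LinearMap.pi f v ∈ LinearMap.range (LinearMap.pi f) := ⟨v, rfl⟩
    have h2 : φ (LinearMap.pi f v) ∈ (LinearMap.range (LinearMap.pi f)).map φ :=
      Submodule.mem_map_of_mem this
    rwa [hφ, Submodule.mem_bot] at h2
  have hcoef : ∀ j, φ (Pi.single j 1) = 0 := by
    have hsum : (∑ j, φ (Pi.single j (1:k)) • f j) = 0 := by
      ext v
      simp only [LinearMap.coe_sum, Finset.sum_apply, LinearMap.smul_apply, smul_eq_mul,
        LinearMap.zero_apply]
      have := hzero v
      rw [key] at this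
      simpa [mul_comm, LinearMap.pi_apply] using this
    exact Fintype.linearIndependent_iff.1 hf _ hsum
  apply hφ0
  apply LinearMap.ext
  intro x
  rw [show φ x = φ x from rfl, key]
  simp [hcoef]

/-- An open submodule of a linearly compact space has finite-dimensional quotient. -/
theorem finiteDimensional_quotient_of_isOpen (hc : IsLinearlyCompact k V)
    {N : Submodule k V} (hNo : IsOpen (N : Set V)) : FiniteDimensional k (V ⧸ N) := by
  haveI := hc.1.tag
  by_contra hfd
  set Q := V ⧸ N
  set b := Module.Basis.ofVectorSpace k Q with hb
  have hJinf : Infinite (Module.Basis.ofVectorSpaceIndex k Q) := by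
    rw [Set.infinite_coe_iff]
    intro hfin
    haveI := hfin.fintype
    exact hfd (Module.Finite.of_basis b)
  set e := Infinite.natEmbedding (Module.Basis.ofVectorSpaceIndex k Q)
  set f : ℕ → (V →ₗ[k] k) := fun n => (b.coord (e n)) ∘ₗ N.mkQ with hf
  have hfN : ∀ n, ∀ w ∈ N, f n w = 0 := by
    intro n w hw
    simp only [hf, LinearMap.comp_apply]
    rw [show N.mkQ w = 0 from (Submodule.Quotient.mk_eq_zero N).2 hw]
    simp
  -- the submodules K n
  set K : ℕ → Submodule k V := fun n =>
    { carrier := {w | ∀ m ≤ n, f m w = 0}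
      zero_mem' := by simp
      add_mem' := by
        intro x y hx hy m hm
        simp [map_add, hx m hm, hy m hm]
      smul_mem' := by
        intro c x hx m hm
        simp [map_smul, hx m hm] } with hK
  have hKN : ∀ n, (N : Set V) ⊆ (K n : Set V) := fun n w hw m _ => hfN m w hw
  have hKopen : ∀ n, IsOpen ((K n : Set V)) := fun n =>
    AddSubgroup.isOpen_mono (H₁ := N.toAddSubgroup) (H₂ := (K n).toAddSubgroup) (hKN n) hNo
  have hKclosed : ∀ n, IsClosed ((K n : Set V)) := fun n =>
    AddSubgroup.isClosed_of_isOpen (K n).toAddSubgroup (hKopen n)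
  -- base points
  have hxn : ∀ n, ∃ x : V, ∀ m ≤ n, f m x = 1 := by
    intro n
    obtain ⟨x, hx⟩ := N.mkQ_surjective (∑ m ∈ Finset.range (n + 1), b (e m))
    classical
    refine ⟨x, fun m hm => ?_⟩
    simp only [hf, LinearMap.comp_apply, hx]
    rw [map_sum]
    have : ∀ m' ∈ Finset.range (n+1), b.coord (e m) (b (e m')) = if m' = m then 1 else 0 := by
      intro m' _
      rw [Module.Basis.coord_apply, Module.Basis.repr_self, Finsupp.single_apply]
      simp [e.injective.eq_iff]
    rw [Finset.sum_congr rfl this, Finset.sum_ite_eq' (Finset.range (n+1)) m]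
    simp [Nat.lt_succ_iff.2 hm]
  choose x hx using hxn
  set C : ℕ → Set V := fun n => {v | ∀ m ≤ n, f m v = 1} with hC
  have hCcoset : ∀ n, C n = ((x n) + ·) '' (K n : Set V) := by
    intro n
    ext v
    constructor
    · intro hv
      refine ⟨v - x n, fun m hm => ?_, by show x n + (v - x n) = v; abel⟩
      simp [map_sub, hv m hm, hx n m hm]
    · rintro ⟨w, hw, rfl⟩
      intro m hm
      simp [map_add, hx n m hm, hw m hm]
  have hmono : ∀ {m n : ℕ}, m ≤ n → C n ⊆ C m := by
    intro m n hmn v hv m' hm'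
    exact hv m' (le_trans hm' hmn)
  have hnon : (⋂₀ Set.range C).Nonempty := by
    apply hc.2.2
    · rintro _ ⟨n, rfl⟩
      exact ⟨K n, x n, hKclosed n, hCcoset n⟩
    · intro 𝒟 h𝒟 hfin
      rcases Set.eq_empty_or_nonempty 𝒟 with rfl | hne
      · simp
      obtain ⟨S, hS⟩ : ∃ S : Set ℕ, S.Finite ∧ S.Nonempty ∧ ∀ D ∈ 𝒟, ∃ n ∈ S, D = C n := by
        have : ∀ D ∈ 𝒟, ∃ n, D = C n := by
          intro D hD
          obtain ⟨n, rfl⟩ := h𝒟 hD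
          exact ⟨n, rfl⟩
        choose g hg using this
        refine ⟨{n | ∃ D, ∃ hD : D ∈ 𝒟, g D hD = n}, ?_, ?_, ?_⟩
        · exact hfin.dependent_image g
        · obtain ⟨D, hD⟩ := hne
          exact ⟨g D hD, D, hD, rfl⟩
        · intro D hD
          exact ⟨g D hD, ⟨D, hD, rfl⟩, hg D hD⟩
      obtain ⟨hSfin, hSne, hSmem⟩ := hS
      obtain ⟨M, hM⟩ := hSfin.bddAbove
      refine ⟨x M, ?_⟩
      intro D hD
      obtain ⟨n, hnS, rfl⟩ := hSmem D hD
      exact hmono (hM hnS) (fun m hm => hx M m hm)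
  obtain ⟨v, hv⟩ := hnon
  have hv' : ∀ n, f n v = 1 := fun n => (hv (C n) ⟨n, rfl⟩) n le_rfl
  -- contradiction with finite support
  have hsupp : {j | b.repr (N.mkQ v) j ≠ 0}.Finite := (b.repr (N.mkQ v)).finite_support
  have hinf : {j | b.repr (N.mkQ v) j ≠ 0}.Infinite := by
    apply Set.infinite_of_injective_forall_mem e.injective
    intro n
    have : b.repr (N.mkQ v) (e n) = 1 := by
      have := hv' n
      exact this
    show b.repr (N.mkQ v) (e n) ≠ 0
    rw [this]; exact one_ne_zero
  exact hinf hsupp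


end Aux


theorem forward {k : Type u} {V : Type v} [Field k]
    [AddCommGroup V] [Module k V] [TopologicalSpace V] (hc : IsLinearlyCompact k V) :
      ∃ (I : Type (max u v)) (e : V ≃ₗ[k] (I → k)),
        @Continuous V (I → k) _ (@Pi.topologicalSpace I (fun _ => k) (fun _ => ⊥)) e ∧
        @Continuous (I → k) V (@Pi.topologicalSpace I (fun _ => k) (fun _ => ⊥)) _ e.symm := by
  classical
  letI : TopologicalSpace k := ⊥
  haveI : DiscreteTopology k := ⟨rfl⟩
  haveI := hc.1.tag
  haveI := hc.2.1
  set D : Submodule k (V →ₗ[k] k) :=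
    { carrier := {f | Continuous f}
      zero_mem' := by
        show Continuous fun v : V => (0 : k)
        exact continuous_const
      add_mem' := by
        intro f g hf hg
        exact Continuous.add hf hg
      smul_mem' := by
        intro c f hf
        exact Continuous.const_smul hf c } with hD
  have hmemD : ∀ f : V →ₗ[k] k, f ∈ D ↔ Continuous f := fun f => Iff.rfl
  set I := ↥(Module.Basis.ofVectorSpaceIndex k D) with hI
  set B : Module.Basis I k D := Module.Basis.ofVectorSpace k D with hB
  set Φ : V →ₗ[k] (I → k) := LinearMap.pi (fun i => ((i : D) : V →ₗ[k] k)) with hΦ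
  -- injectivity
  have hinj : Function.Injective Φ := by
    intro v w hvw
    by_contra hne
    have hv : v - w ≠ 0 := sub_ne_zero.2 hne
    obtain ⟨f, hfc, hfv⟩ := exists_continuous_functional hc.1 hv
    apply hfv
    have hall : ∀ g : D, (g : V →ₗ[k] k) (v - w) = 0 := by
      set ev : D →ₗ[k] k :=
        { toFun := fun g => (g : V →ₗ[k] k) (v - w)
          map_add' := by intro a b; simp
          map_smul' := by intro c a; simp }
      have hev : ev = 0 := by
        apply B.ext
        intro i
        show ((B i : D) : V →ₗ[k] k) (v - w) = 0
        rw [hB, Module.Basis.ofVectorSpace_apply_self]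
        have : Φ v = Φ w := hvw
        have hi := congrFun this i
        simp only [hΦ, LinearMap.pi_apply] at hi
        simp [map_sub, hi]
      intro g
      calc (g : V →ₗ[k] k) (v - w) = ev g := rfl
        _ = (0 : D →ₗ[k] k) g := by rw [hev]
        _ = 0 := rfl
    exact hall ⟨f, hfc⟩
  -- surjectivity
  have hsurj : Function.Surjective Φ := by
    intro c
    -- basis elements are nonzero continuous functionals
    have hBnz : ∀ i : I, ((i : D) : V →ₗ[k] k) ≠ 0 := by
      intro i h0
      have : (i : D) = 0 := by
        apply Subtype.ext
        exact h0
      have hne := B.ne_zero i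
      rw [hB, Module.Basis.ofVectorSpace_apply_self] at hne
      exact hne this
    have hhit : ∀ (i : I) (a : k), ∃ v, ((i : D) : V →ₗ[k] k) v = a := by
      intro i a
      have : ∃ w, ((i : D) : V →ₗ[k] k) w ≠ 0 := by
        by_contra hno
        push_neg at hno
        exact hBnz i (LinearMap.ext fun w => hno w)
      obtain ⟨w, hw⟩ := this
      refine ⟨(a * (((i : D) : V →ₗ[k] k) w)⁻¹) • w, ?_⟩
      rw [map_smul]
      field_simp
      rw [smul_eq_mul, div_mul_cancel₀ _ hw]
    set 𝒞 : Set (Set V) := Set.range (fun i : I => {v | ((i : D) : V →ₗ[k] k) v = c i}) with h𝒞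
    have hnon : (⋂₀ 𝒞).Nonempty := by
      apply hc.2.2
      · rintro _ ⟨i, rfl⟩
        obtain ⟨v₀, hv₀⟩ := hhit i (c i)
        refine ⟨LinearMap.ker ((i : D) : V →ₗ[k] k), v₀, ?_, ?_⟩
        · have : (LinearMap.ker ((i : D) : V →ₗ[k] k) : Set V)
              = (((i : D) : V →ₗ[k] k)) ⁻¹' {0} := by
            ext v; simp [LinearMap.mem_ker]
          rw [this]
          exact IsClosed.preimage (i : D).2 isClosed_singleton
        · ext v
          constructor
          · intro hv
            refine ⟨v - v₀, ?_, by show v₀ + (v - v₀) = v; abel⟩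
            simp only [SetLike.mem_coe, LinearMap.mem_ker, map_sub]
            rw [show ((i : D) : V →ₗ[k] k) v = c i from hv, hv₀, sub_self]
          · rintro ⟨w, hw, rfl⟩
            show ((i : D) : V →ₗ[k] k) (v₀ + w) = c i
            rw [map_add, hv₀, show ((i : D) : V →ₗ[k] k) w = 0 from hw, add_zero]
      · intro 𝒟 h𝒟 hfin
        have hch : ∀ D' ∈ 𝒟, ∃ i : I, {v | ((i : D) : V →ₗ[k] k) v = c i} = D' := by
          intro D' hD'
          exact h𝒟 hD'
        choose g hg using hch
        set S : Set I := {i | ∃ D', ∃ hD' : D' ∈ 𝒟, g D' hD' = i} with hS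
        have hSfin : S.Finite := hfin.dependent_image g
        haveI := hSfin.fintype
        set n := Fintype.card S with hn
        set q : Fin n ≃ S := (Fintype.equivFin S).symm with hq
        set fam : Fin n → (V →ₗ[k] k) := fun j => (((q j : S) : I) : D) with hfam
        have hfamind : LinearIndependent k fam := by
          have h1 : LinearIndependent k B := B.linearIndependent
          have h2 : Function.Injective (fun j : Fin n => ((q j : S) : I)) := by
            intro j₁ j₂ h
            exact q.injective (Subtype.ext h)
          have h3 := h1.comp _ h2
          have h4 := h3.map_injOn D.subtype (Subtype.val_injective.injOn)
          convert h4 using 1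
          funext j
          show (((q j : S) : I) : D).1 = D.subtype (B ((q j : S) : I))
          rw [hB, Module.Basis.ofVectorSpace_apply_self]
          rfl
        obtain ⟨v, hv⟩ := surjective_pi_of_linearIndependent fam hfamind
          (fun j => c ((q j : S) : I))
        refine ⟨v, ?_⟩
        intro D' hD'
        rw [← hg D' hD']
        show ((((g D' hD') : I) : D) : V →ₗ[k] k) v = c (g D' hD')
        have hiS : (g D' hD') ∈ S := ⟨D', hD', rfl⟩
        set j := q.symm ⟨g D' hD', hiS⟩ with hj
        have hqj : (q j : S) = ⟨g D' hD', hiS⟩ := by rw [hj, Equiv.apply_symm_apply]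
        have := congrFun hv j
        simp only [LinearMap.pi_apply] at this
        rw [hfam] at this
        rw [show (((g D' hD' : I)) : D) = ((q j : S) : I) by rw [hqj]]
        rw [this, hqj]
    obtain ⟨v, hv⟩ := hnon
    refine ⟨v, ?_⟩
    funext i
    have := hv {w | ((i : D) : V →ₗ[k] k) w = c i} ⟨i, rfl⟩
    simpa [hΦ, LinearMap.pi_apply] using this
  set e : V ≃ₗ[k] (I → k) := LinearEquiv.ofBijective Φ ⟨hinj, hsurj⟩ with he
  have hec : ∀ v, e v = Φ v := fun v => rfl
  refine ⟨I, e, ?_, ?_⟩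
  · show Continuous fun v => e v
    simp only [hec]
    exact continuous_pi fun i => (i : D).2
  · -- continuity of the inverse
    haveI : IsTopologicalAddGroup (I → k) := Pi.topologicalAddGroup
    apply continuous_of_continuousAt_zero e.symm.toLinearMap.toAddMonoidHom
    rw [ContinuousAt, map_zero]
    rw [Filter.tendsto_def]
    intro U' hU'
    obtain ⟨N, hNo, hNU⟩ := exists_open_submodule hc.1 hU'
    haveI hfd : FiniteDimensional k (V ⧸ N) := finiteDimensional_quotient_of_isOpen hc hNo
    set s : Fin (Module.finrank k (Module.Dual k (V ⧸ N))) → Module.Dual k (V ⧸ N) :=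
      ⇑(Module.finBasis k (Module.Dual k (V ⧸ N))) with hs
    have hker : ∀ v : V, (∀ j, s j (N.mkQ v) = 0) → v ∈ N := by
      intro v hv
      rw [← Submodule.Quotient.mk_eq_zero N, ← Submodule.mkQ_apply]
      rw [← Module.forall_dual_apply_eq_zero_iff (R := k)]
      intro φ
      have := (Module.finBasis k (Module.Dual k (V ⧸ N))).sum_repr φ
      rw [← this]
      simp only [LinearMap.coe_sum, Finset.sum_apply, LinearMap.smul_apply, smul_eq_mul]
      rw [Finset.sum_congr rfl (fun j _ => by rw [show ((Module.finBasis k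
        (Module.Dual k (V ⧸ N))) j) (N.mkQ v) = 0 from hv j, mul_zero])]
      simp
    -- the functionals s j ∘ mkQ are continuous
    set h : Fin (Module.finrank k (Module.Dual k (V ⧸ N))) → (V →ₗ[k] k) :=
      fun j => (s j) ∘ₗ N.mkQ with hh
    have hhD : ∀ j, h j ∈ D := by
      intro j
      apply continuous_of_ker_open hc.1.tag
      · exact hNo
      · intro w hw
        simp only [hh, LinearMap.comp_apply]
        rw [show N.mkQ w = 0 from (Submodule.Quotient.mk_eq_zero N).2 hw]
        simp
    set S : Finset I := Finset.univ.biUnion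
      (fun j => (B.repr ⟨h j, hhD j⟩).support) with hSdef
    set W : Set (I → k) := ⋂ i ∈ S, {x : I → k | x i = 0} with hW
    have hWopen : IsOpen W := by
      apply isOpen_biInter_finset
      intro i _
      have : {x : I → k | x i = 0} = (fun x : I → k => x i) ⁻¹' {0} := rfl
      rw [this]
      exact IsOpen.preimage (continuous_apply i) (isOpen_discrete _)
    have hW0 : (0 : I → k) ∈ W := Set.mem_iInter₂.2 fun i _ => rfl
    apply Filter.mem_of_superset (hWopen.mem_nhds hW0)
    intro x hx
    show e.symm x ∈ U'
    apply hNU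
    set v := e.symm x with hv
    have hΦv : Φ v = x := by
      have h1 : e (e.symm x) = x := e.apply_symm_apply x
      calc Φ v = e v := (hec v).symm
        _ = x := h1
    have hxS : ∀ i ∈ S, ((i : D) : V →ₗ[k] k) v = 0 := by
      intro i hiS
      have : ((i : D) : V →ₗ[k] k) v = Φ v i := rfl
      rw [this, hΦv]
      exact Set.mem_iInter₂.1 hx i hiS
    apply hker
    intro j
    show (s j ∘ₗ N.mkQ) v = 0
    have hrep := B.linearCombination_repr ⟨h j, hhD j⟩
    have : h j = D.subtype (Finsupp.linearCombination k B (B.repr ⟨h j, hhD j⟩)) := by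
      rw [hrep]; rfl
    rw [show (s j ∘ₗ N.mkQ) = h j from rfl, this]
    rw [Finsupp.linearCombination_apply, Finsupp.sum, map_sum]
    simp only [map_smul]
    rw [LinearMap.coe_sum]
    simp only [Finset.sum_apply, LinearMap.smul_apply, smul_eq_mul]
    apply Finset.sum_eq_zero
    intro i hi
    have hiS : i ∈ S := Finset.mem_biUnion.2 ⟨j, Finset.mem_univ j, hi⟩
    have : D.subtype (B i) = ((i : D) : V →ₗ[k] k) := by
      rw [hB, Module.Basis.ofVectorSpace_apply_self]
      rfl
    rw [this, hxS i hiS, mul_zero]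

theorem pi_fip {k : Type*} [Field k] [TopologicalSpace k] [DiscreteTopology k] {I : Type*}
    (𝒞 : Set (Set (I → k)))
    (hco : ∀ C ∈ 𝒞, ∃ (N : Submodule k (I → k)) (x : I → k),
      IsClosed (N : Set (I → k)) ∧ C = (x + ·) '' (N : Set (I → k)))
    (hfip : ∀ 𝒟 ⊆ 𝒞, 𝒟.Finite → (⋂₀ 𝒟).Nonempty) :
    (⋂₀ 𝒞).Nonempty := by
  classical
  have hcoset_mem : ∀ (N : Submodule k (I → k)) (x : I → k) (u : I → k),
      u ∈ (x + ·) '' (N : Set (I → k)) ↔ u - x ∈ N := by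
    intro N x u
    constructor
    · rintro ⟨n, hn, rfl⟩
      simpa using hn
    · intro hu
      exact ⟨u - x, hu, by show x + (u - x) = u; abel⟩
  set S : Set (Set (Set (I → k))) := {G | 𝒞 ⊆ G ∧
    (∀ C ∈ G, ∃ (N : Submodule k (I → k)) (x : I → k),
      IsClosed (N : Set (I → k)) ∧ C = (x + ·) '' (N : Set (I → k))) ∧
    (∀ 𝒟 ⊆ G, 𝒟.Finite → (⋂₀ 𝒟).Nonempty)} with hS
  have hzorn : ∀ c ⊆ S, IsChain (· ⊆ ·) c → c.Nonempty →
      ∃ ub ∈ S, ∀ s ∈ c, s ⊆ ub := by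
    intro c hcS hchain hcne
    refine ⟨⋃₀ c, ⟨?_, ?_, ?_⟩, fun s hs => Set.subset_sUnion_of_mem hs⟩
    · obtain ⟨G₀, hG₀⟩ := hcne
      exact subset_trans (hcS hG₀).1 (Set.subset_sUnion_of_mem hG₀)
    · intro C hC
      obtain ⟨G₀, hG₀c, hCG₀⟩ := hC
      exact (hcS hG₀c).2.1 C hCG₀
    · intro 𝒟 h𝒟 h𝒟fin
      have key : ∀ (s : Set (Set (I → k))), s.Finite → s ⊆ ⋃₀ c → ∃ G₀ ∈ c, s ⊆ G₀ := by
        intro s hsfin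
        refine Set.Finite.induction_on (motive := fun s _ => s ⊆ ⋃₀ c → ∃ G₀ ∈ c, s ⊆ G₀)
          s hsfin ?_ ?_
        · intro _
          obtain ⟨G₀, hG₀⟩ := hcne
          exact ⟨G₀, hG₀, Set.empty_subset _⟩
        · intro a s _ _ ih hsub
          obtain ⟨G₁, hG₁c, hsG₁⟩ := ih (subset_trans (Set.subset_insert a s) hsub)
          obtain ⟨G₂, hG₂c, haG₂⟩ := hsub (Set.mem_insert a s)
          rcases hchain.total hG₁c hG₂c with h12 | h21
          · exact ⟨G₂, hG₂c, Set.insert_subset haG₂ (subset_trans hsG₁ h12)⟩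
          · exact ⟨G₁, hG₁c, Set.insert_subset (h21 haG₂) hsG₁⟩
      obtain ⟨G₀, hG₀c, h𝒟G₀⟩ := key 𝒟 h𝒟fin h𝒟
      exact (hcS hG₀c).2.2 𝒟 h𝒟G₀ h𝒟fin
  obtain ⟨G, hG𝒞sub, hGmax⟩ := zorn_subset_nonempty S hzorn 𝒞 ⟨subset_rfl, hco, hfip⟩
  have hGS : G ∈ S := hGmax.1
  obtain ⟨hG𝒞, hGco, hGfip⟩ := hGS
  -- maximality: any coset of a closed submodule meeting all finite intersections is in G
  have hadd : ∀ Dset : Set (I → k),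
      (∃ (N : Submodule k (I → k)) (x : I → k), IsClosed (N : Set (I → k)) ∧ Dset = (x + ·) '' (N : Set (I → k))) →
      (∀ 𝒟 ⊆ G, 𝒟.Finite → (Dset ∩ ⋂₀ 𝒟).Nonempty) → Dset ∈ G := by
    intro Dset hcos hmeet
    have hins : insert Dset G ∈ S := by
      refine ⟨subset_trans hG𝒞 (Set.subset_insert _ _), ?_, ?_⟩
      · intro C hC
        rcases hC with rfl | hC
        · exact hcos
        · exact hGco C hC
      · intro 𝒟 h𝒟 h𝒟fin
        by_cases hD : Dset ∈ 𝒟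
        · have h1 : 𝒟 \ {Dset} ⊆ G := by
            intro C hC
            rcases h𝒟 hC.1 with rfl | h
            · exact absurd rfl hC.2
            · exact h
          have h2 : ⋂₀ 𝒟 = Dset ∩ ⋂₀ (𝒟 \ {Dset}) := by
            rw [← Set.sInter_insert, Set.insert_diff_singleton, Set.insert_eq_self.2 hD]
          rw [h2]
          exact hmeet _ h1 h𝒟fin.diff
        · apply hGfip 𝒟 ?_ h𝒟fin
          intro C hC
          rcases h𝒟 hC with rfl | h
          · exact absurd hC hD
          · exact h
    have : insert Dset G ⊆ G := hGmax.2 hins (Set.subset_insert _ _)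
    exact this (Set.mem_insert _ _)
  -- G is closed under finite intersections
  have hInt : ∀ 𝒟 ⊆ G, 𝒟.Finite → ⋂₀ 𝒟 ∈ G := by
    intro 𝒟 h𝒟 h𝒟fin
    obtain ⟨z, hz⟩ := hGfip 𝒟 h𝒟 h𝒟fin
    have hzmem : ∀ C ∈ 𝒟, z ∈ C := fun C hC => hz C hC
    -- the submodule
    set M : Submodule k (I → k) :=
      { carrier := {w | z + w ∈ ⋂₀ 𝒟}
        zero_mem' := by simpa using hz
        add_mem' := by
          intro w₁ w₂ hw₁ hw₂
          intro C hC
          obtain ⟨N, x, _, hCeq⟩ := hGco C (h𝒟 hC)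
          rw [hCeq, hcoset_mem]
          have h1 : (z + w₁) - x ∈ N := (hcoset_mem N x _).1 (hCeq ▸ hw₁ C hC)
          have h2 : (z + w₂) - x ∈ N := (hcoset_mem N x _).1 (hCeq ▸ hw₂ C hC)
          have h3 : z - x ∈ N := (hcoset_mem N x _).1 (hCeq ▸ hzmem C hC)
          have : (z + (w₁ + w₂)) - x = ((z + w₁) - x) + ((z + w₂) - x) - (z - x) := by abel
          rw [this]
          exact N.sub_mem (N.add_mem h1 h2) h3
        smul_mem' := by
          intro c w hw
          intro C hC
          obtain ⟨N, x, _, hCeq⟩ := hGco C (h𝒟 hC)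
          rw [hCeq, hcoset_mem]
          have h1 : (z + w) - x ∈ N := (hcoset_mem N x _).1 (hCeq ▸ hw C hC)
          have h3 : z - x ∈ N := (hcoset_mem N x _).1 (hCeq ▸ hzmem C hC)
          have : (z + c • w) - x = c • ((z + w) - x) + ((z - x) - c • (z - x)) := by
            rw [smul_sub, smul_add, smul_sub]
            abel
          rw [this]
          exact N.add_mem (N.smul_mem c h1) (N.sub_mem h3 (N.smul_mem c h3)) } with hM
    apply hadd
    · refine ⟨M, z, ?_, ?_⟩
      · have hMeq : (M : Set (I → k)) = (z + ·) ⁻¹' (⋂₀ 𝒟) := rfl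
        rw [hMeq]
        apply IsClosed.preimage (continuous_const.add continuous_id)
        apply isClosed_sInter
        intro C hC
        obtain ⟨N, x, hNcl, hCeq⟩ := hGco C (h𝒟 hC)
        rw [hCeq]
        exact ((Homeomorph.addLeft x).isClosed_image).2 hNcl
      · ext u
        rw [hcoset_mem]
        show u ∈ ⋂₀ 𝒟 ↔ z + (u - z) ∈ ⋂₀ 𝒟
        rw [show z + (u - z) = u by abel]
    · intro 𝒟₂ h𝒟₂ h𝒟₂fin
      rw [← Set.sInter_union]
      exact hGfip (𝒟 ∪ 𝒟₂) (Set.union_subset h𝒟 h𝒟₂) (h𝒟fin.union h𝒟₂fin)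
  -- choice of coordinates
  have hpoint : ∀ i : I, ∃ a : k, ∀ 𝒟 ⊆ G, 𝒟.Finite → ∃ w ∈ ⋂₀ 𝒟, w i = a := by
    intro i
    by_cases hcase : ∃ C₀ ∈ G, ∃ b : k, ∀ w ∈ C₀, w i = b
    · obtain ⟨C₀, hC₀, b, hb⟩ := hcase
      refine ⟨b, fun 𝒟 h𝒟 h𝒟fin => ?_⟩
      obtain ⟨w, hw⟩ := hGfip (insert C₀ 𝒟) (Set.insert_subset hC₀ h𝒟) (h𝒟fin.insert _)
      refine ⟨w, fun C hC => hw C (Set.mem_insert_of_mem _ hC),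
        hb w (hw C₀ (Set.mem_insert _ _))⟩
    · push_neg at hcase
      refine ⟨0, fun 𝒟 h𝒟 h𝒟fin => ?_⟩
      have hE : ⋂₀ 𝒟 ∈ G := hInt 𝒟 h𝒟 h𝒟fin
      obtain ⟨w₁, hw₁⟩ := hGfip 𝒟 h𝒟 h𝒟fin
      by_cases hw₁i : w₁ i = 0
      · exact ⟨w₁, hw₁, hw₁i⟩
      obtain ⟨w₂, hw₂, hw₂i⟩ := hcase (⋂₀ 𝒟) hE (w₁ i)
      obtain ⟨N, x, _, hEeq⟩ := hGco _ hE
      set cc : k := (0 - w₁ i) / (w₂ i - w₁ i) with hcc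
      refine ⟨w₁ + cc • (w₂ - w₁), ?_, ?_⟩
      · rw [hEeq, hcoset_mem]
        have h1 : w₁ - x ∈ N := (hcoset_mem N x _).1 (hEeq ▸ hw₁)
        have h2 : w₂ - x ∈ N := (hcoset_mem N x _).1 (hEeq ▸ hw₂)
        have : (w₁ + cc • (w₂ - w₁)) - x = (w₁ - x) + cc • ((w₂ - x) - (w₁ - x)) := by
          module
        rw [this]
        exact N.add_mem h1 (N.smul_mem cc (N.sub_mem h2 h1))
      · show (w₁ + cc • (w₂ - w₁)) i = 0
        have hne : w₂ i - w₁ i ≠ 0 := sub_ne_zero.2 hw₂i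
        simp only [Pi.add_apply, Pi.smul_apply, Pi.sub_apply, smul_eq_mul, hcc]
        field_simp
        ring
  choose a ha using hpoint
  -- the hyperplane cosets are in G
  have hDiG : ∀ i : I, {y : I → k | y i = a i} ∈ G := by
    intro i
    apply hadd
    · refine ⟨LinearMap.ker (LinearMap.proj i : (I → k) →ₗ[k] k), (fun _ => a i), ?_, ?_⟩
      · have : (LinearMap.ker (LinearMap.proj i : (I → k) →ₗ[k] k) : Set (I → k))
            = (fun y : I → k => y i) ⁻¹' {0} := by
          ext y
          simp [LinearMap.mem_ker]
        rw [this]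
        exact IsClosed.preimage (continuous_apply i) isClosed_singleton
      · ext y
        rw [hcoset_mem, LinearMap.mem_ker]
        simp [LinearMap.proj_apply, sub_eq_zero]
    · intro 𝒟 h𝒟 h𝒟fin
      obtain ⟨w, hw, hwi⟩ := ha i 𝒟 h𝒟 h𝒟fin
      exact ⟨w, hwi, hw⟩
  -- conclusion
  refine ⟨a, ?_⟩
  rw [Set.mem_sInter]
  intro C hC
  have hCG : C ∈ G := hG𝒞 hC
  obtain ⟨N, x, hNcl, hCeq⟩ := hGco C hCG
  have hCcl : IsClosed C := by
    rw [hCeq]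
    exact ((Homeomorph.addLeft x).isClosed_image).2 hNcl
  rw [← hCcl.closure_eq]
  rw [mem_closure_iff_nhds]
  intro t ht
  rw [nhds_pi, Filter.mem_pi] at ht
  obtain ⟨J, hJfin, tset, htset, hsub⟩ := ht
  set 𝒟 : Set (Set (I → k)) := insert C ((fun i => {y : I → k | y i = a i}) '' J) with h𝒟
  have h𝒟G : 𝒟 ⊆ G := by
    intro E hE
    rcases hE with rfl | ⟨i, _, rfl⟩
    · exact hCG
    · exact hDiG i
  have h𝒟fin : 𝒟.Finite := (hJfin.image _).insert C
  obtain ⟨w, hw⟩ := hGfip 𝒟 h𝒟G h𝒟fin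
  refine ⟨w, ?_, hw C (Set.mem_insert _ _)⟩
  apply hsub
  intro i hiJ
  have : w i = a i := hw _ (Set.mem_insert_of_mem _ ⟨i, hiJ, rfl⟩)
  rw [this]
  exact mem_of_mem_nhds (htset i)

theorem backward {k : Type u} {V : Type v} [Field k] [AddCommGroup V] [Module k V]
    [TopologicalSpace V] (hlin : IsLinearTopology' k V) {I : Type*} (e : V ≃ₗ[k] (I → k))
    (hc1 : @Continuous V (I → k) _ (@Pi.topologicalSpace I (fun _ => k) (fun _ => ⊥)) e)
    (hc2 : @Continuous (I → k) V (@Pi.topologicalSpace I (fun _ => k) (fun _ => ⊥)) _ e.symm) :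
    IsLinearlyCompact k V := by
  letI : TopologicalSpace k := ⊥
  haveI : DiscreteTopology k := ⟨rfl⟩
  have hc1' : Continuous (e : V → (I → k)) := hc1
  have hc2' : Continuous (e.symm : (I → k) → V) := hc2
  set h : V ≃ₜ (I → k) :=
    { toEquiv := e.toEquiv
      continuous_toFun := hc1'
      continuous_invFun := hc2' } with hh
  refine ⟨hlin, T2Space.of_injective_continuous e.injective hc1', ?_⟩
  intro 𝒞 hco hfip
  set 𝒞' : Set (Set (I → k)) := (Set.image (e : V → (I → k))) '' 𝒞 with h𝒞'
  have himg : ∀ (N : Submodule k V) (x : V),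
      (e : V → (I → k)) '' ((x + ·) '' (N : Set V))
        = ((e x + ·) '' ((N.map (e : V →ₗ[k] (I → k))) : Set (I → k))) := by
    intro N x
    rw [Submodule.map_coe]
    rw [← Set.image_comp, ← Set.image_comp]
    congr! 1
    funext n
    simp [map_add]
  have hco' : ∀ C' ∈ 𝒞', ∃ (N' : Submodule k (I → k)) (x' : I → k),
      IsClosed (N' : Set (I → k)) ∧ C' = (x' + ·) '' (N' : Set (I → k)) := by
    rintro _ ⟨C, hC, rfl⟩
    obtain ⟨N, x, hNcl, rfl⟩ := hco C hC
    refine ⟨N.map (e : V →ₗ[k] (I → k)), e x, ?_, himg N x⟩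
    rw [Submodule.map_coe]
    show IsClosed ((e : V → (I → k)) '' (N : Set V))
    exact (h.isClosed_image).2 hNcl
  have hfip' : ∀ 𝒟' ⊆ 𝒞', 𝒟'.Finite → (⋂₀ 𝒟').Nonempty := by
    intro 𝒟' h𝒟' h𝒟'fin
    set 𝒟 : Set (Set V) := {C | C ∈ 𝒞 ∧ (Set.image (e : V → (I → k)) C) ∈ 𝒟'} with h𝒟
    have h𝒟sub : 𝒟 ⊆ 𝒞 := fun C hC => hC.1
    have h𝒟fin : 𝒟.Finite := by
      have hinj : Set.InjOn (Set.image (e : V → (I → k))) 𝒟 :=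
        fun C₁ _ C₂ _ hC => (Set.image_eq_image e.injective).1 hC
      apply Set.Finite.of_finite_image ?_ hinj
      exact h𝒟'fin.subset (fun D hD => by
        obtain ⟨C, hC, rfl⟩ := hD
        exact hC.2)
    obtain ⟨z, hz⟩ := hfip 𝒟 h𝒟sub h𝒟fin
    refine ⟨e z, ?_⟩
    rw [Set.mem_sInter]
    intro D' hD'
    obtain ⟨C, hC𝒞, rfl⟩ := h𝒟' hD'
    exact ⟨z, hz C ⟨hC𝒞, hD'⟩, rfl⟩
  obtain ⟨w, hw⟩ := pi_fip 𝒞' hco' hfip'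
  refine ⟨e.symm w, ?_⟩
  rw [Set.mem_sInter]
  intro C hC
  have : w ∈ (Set.image (e : V → (I → k)) C) := hw _ ⟨C, hC, rfl⟩
  obtain ⟨u, huC, hu⟩ := this
  rw [← hu]
  simpa using huC



/-- A linearly topologized vector space over a field `k` is linearly compact if and only
if it is isomorphic as a topological vector space to a product `k^I` of copies of `k`,
each factor discrete and the product carrying the product topology. -/
theorem linearlyCompact_iff_product_of_copies (k : Type u) (V : Type v) [Field k]
    [AddCommGroup V] [Module k V] [TopologicalSpace V] (hlin : IsLinearTopology' k V) :
    IsLinearlyCompact k V ↔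
      ∃ (I : Type (max u v)) (e : V ≃ₗ[k] (I → k)),
        @Continuous V (I → k) _ (@Pi.topologicalSpace I (fun _ => k) (fun _ => ⊥)) e ∧
        @Continuous (I → k) V (@Pi.topologicalSpace I (fun _ => k) (fun _ => ⊥)) _ e.symm := by
  constructor
  · exact fun hc => forward hc
  · rintro ⟨I, e, hc1, hc2⟩
    exact backward hlin e hc1 hc2
end
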